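/- arXiv:2501.15462 — 4 statements merged into one kernel-verified Lean document; each statement's English description precedes it below -/
import Mathlib

section
/- Let G and H be countable discrete groups, p, q > 0 real numbers, and E ⊆ G, F ⊆ H subsets such that for every finitely supported function f : G → ℂ with support contained in E, the operator norm of the left convolution operator λ_G(f) on ℓ²(G) is at most p·‖f‖₂, and for every finitely supported f' : H → ℂ with support contained in F, ‖λ_H(f')‖ ≤ q·‖f'‖₂. Then for every finitely supported φ : G × H → ℂ with support contained in E × F, the operator norm of λ_{G×H}(φ) on ℓ²(G × H) is at most p·q·‖φ‖₂. -/
open scoped BigOperators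

/-- The convolution of a finitely supported function with an arbitrary function
on a group: `(f * ω)(g) = Σ_h f(h) ω(h⁻¹ g)`. -/
noncomputable def conv {G : Type*} [Group G] (f : G →₀ ℂ) (ω : G → ℂ) : G → ℂ :=
  fun g => ∑ h ∈ f.support, f h * ω (h⁻¹ * g)

/-- The squared ℓ²-norm of a finitely supported function. -/
noncomputable def l2sq {G : Type*} (f : G →₀ ℂ) : ℝ :=
  ∑ g ∈ f.support, ‖f g‖ ^ 2

lemma l2sq_nonneg {G : Type*} (f : G →₀ ℂ) : 0 ≤ l2sq f :=
  Finset.sum_nonneg fun _ _ => by positivity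

lemma memℓp_two_iff {α : Type*} (f : α → ℂ) :
    Memℓp f 2 ↔ Summable (fun a => ‖f a‖ ^ 2) := by
  rw [memℓp_gen_iff (by norm_num : (0:ℝ) < (2:ENNReal).toReal)]
  have : ∀ x : ℝ, x ^ ((2:ENNReal).toReal) = x ^ (2:ℕ) := by
    intro x
    rw [show ((2:ENNReal).toReal) = ((2:ℕ):ℝ) by norm_num, Real.rpow_natCast]
  simp only [this]

noncomputable def toL2 {α : Type*} (f : α → ℂ) (hf : Summable fun a => ‖f a‖ ^ 2) :
    lp (fun _ : α => ℂ) 2 := ⟨f, (memℓp_two_iff f).2 hf⟩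

@[simp] lemma toL2_apply {α : Type*} (f : α → ℂ) (hf : Summable fun a => ‖f a‖ ^ 2) (a : α) :
    toL2 f hf a = f a := rfl

lemma norm_toL2_sq {α : Type*} (f : α → ℂ) (hf : Summable fun a => ‖f a‖ ^ 2) :
    ‖toL2 f hf‖ ^ 2 = ∑' a, ‖f a‖ ^ 2 := by
  have h := lp.norm_rpow_eq_tsum (p := 2) (by norm_num) (toL2 f hf)
  have e : ∀ x : ℝ, x ^ ((2:ENNReal).toReal) = x ^ (2:ℕ) := by
    intro x
    rw [show ((2:ENNReal).toReal) = ((2:ℕ):ℝ) by norm_num, Real.rpow_natCast]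
  simp only [e, toL2_apply] at h
  exact h

lemma summable_translate {G : Type*} [Group G] (ω : G → ℂ)
    (hω : Summable fun g => ‖ω g‖ ^ 2) (h : G) :
    Summable fun g => ‖ω (h⁻¹ * g)‖ ^ 2 :=
  hω.comp_injective (mul_right_injective h⁻¹)

lemma summable_conv {G : Type*} [Group G] (f : G →₀ ℂ) (ω : G → ℂ)
    (hω : Summable fun g => ‖ω g‖ ^ 2) :
    Summable fun g => ‖conv f ω g‖ ^ 2 := by
  have key : conv f ω =
      ⇑(∑ h ∈ f.support, f h • toL2 (fun g => ω (h⁻¹ * g)) (summable_translate ω hω h)) := by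
    funext g
    rw [lp.coeFn_sum]
    simp only [Finset.sum_apply, lp.coeFn_smul, Pi.smul_apply, toL2, smul_eq_mul]
    rfl
  rw [key]
  exact (memℓp_two_iff _).1 (lp.memℓp _)

/-- Decomposition of a sum over the support of `φ : G × H →₀ ℂ` into slices. -/
lemma sum_slices {G H M : Type*} [AddCommMonoid M] [DecidableEq H]
    (φ : G × H →₀ ℂ) (fb : H → (G →₀ ℂ)) (hfb : ∀ b a, fb b a = φ (a, b))
    (k : G → H → M) :
    ∑ x ∈ φ.support, k x.1 x.2
      = ∑ b ∈ φ.support.image Prod.snd, ∑ a ∈ (fb b).support, k a b := by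
  rw [← Finset.sum_fiberwise_of_maps_to (g := Prod.snd)
    (fun x hx => Finset.mem_image_of_mem _ hx) (fun x => k x.1 x.2)]
  refine Finset.sum_congr rfl fun b _ => ?_
  refine Finset.sum_nbij' (fun x => x.1) (fun a => (a, b)) ?_ ?_ ?_ ?_ ?_
  · intro x hx
    rw [Finset.mem_filter] at hx
    rw [Finsupp.mem_support_iff, hfb, ← hx.2]
    exact Finsupp.mem_support_iff.1 hx.1
  · intro a ha
    rw [Finset.mem_filter]
    refine ⟨Finsupp.mem_support_iff.2 ?_, rfl⟩
    rw [← hfb b a]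
    exact Finsupp.mem_support_iff.1 ha
  · intro x hx
    rw [Finset.mem_filter] at hx
    exact Prod.ext rfl hx.2.symm
  · intro a _; rfl
  · intro x hx
    rw [Finset.mem_filter] at hx
    rw [hx.2]

/-- `OpBound p f` says that the left convolution operator `λ(f)` on `ℓ²` has operator
norm at most `p · ‖f‖₂`, expressed via the (squared) norm inequality
`‖f * ω‖₂² ≤ p² ‖f‖₂² ‖ω‖₂²` for every `ω ∈ ℓ²`. -/
def OpBound {G : Type*} [Group G] (p : ℝ) (f : G →₀ ℂ) : Prop :=
  ∀ ω : G → ℂ, Summable (fun g => ‖ω g‖ ^ 2) →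
    ∑' g, ‖conv f ω g‖ ^ 2 ≤ p ^ 2 * l2sq f * ∑' g, ‖ω g‖ ^ 2

/-- If `‖λ_G(f)‖ ≤ p‖f‖₂` for all `f` supported in `E ⊆ G`, and
`‖λ_H(f')‖ ≤ q‖f'‖₂` for all `f'` supported in `F ⊆ H`, then
`‖λ_{G×H}(φ)‖ ≤ pq‖φ‖₂` for all `φ` supported in `E × F`. -/
theorem stmt0 {G H : Type*} [Group G] [Group H] [Countable G] [Countable H]
    (p q : ℝ) (hp : 0 < p) (hq : 0 < q) (E : Set G) (F : Set H)
    (hG : ∀ f : G →₀ ℂ, ↑f.support ⊆ E → OpBound p f)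
    (hH : ∀ f' : H →₀ ℂ, ↑f'.support ⊆ F → OpBound q f')
    (φ : (G × H) →₀ ℂ) (hφ : ↑φ.support ⊆ E ×ˢ F) :
    OpBound (p * q) φ := by
  classical
  intro ω hω
  -- slices of φ
  set ψ : H × G →₀ ℂ := φ.equivMapDomain (Equiv.prodComm G H) with hψdef
  set fb : H → (G →₀ ℂ) := fun b => ψ.curry b with hfbdef
  have hfb : ∀ b a, fb b a = φ (a, b) := by
    intro b a
    rw [hfbdef]
    rw [Finsupp.curry_apply, hψdef, Finsupp.equivMapDomain_apply]
    rfl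
  set B : Finset H := φ.support.image Prod.snd with hB
  -- supports of slices lie in E
  have hsuppE : ∀ b, ((fb b).support : Set G) ⊆ E := by
    intro b a ha
    have h1 : φ (a, b) ≠ 0 := by
      rw [← hfb]; exact Finsupp.mem_support_iff.1 ha
    exact (hφ (Finsupp.mem_support_iff.2 h1)).1
  -- the finsupp v of ℓ²-norms of slices
  have hmap0 : (fun f0 : G →₀ ℂ => ((Real.sqrt (l2sq f0) : ℝ) : ℂ)) 0 = 0 := by
    simp [l2sq]
  set v : H →₀ ℂ := Finsupp.mapRange (fun f0 : G →₀ ℂ => ((Real.sqrt (l2sq f0) : ℝ) : ℂ)) hmap0 ψ.curry with hvdef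
  have hvb : ∀ b, v b = ((Real.sqrt (l2sq (fb b)) : ℝ) : ℂ) := by
    intro b; rw [hvdef, Finsupp.mapRange_apply, hfbdef]
  have hvB : v.support ⊆ B := by
    intro b hb
    have hb' : v b ≠ 0 := Finsupp.mem_support_iff.1 hb
    rw [hvb b] at hb'
    have h0 : l2sq (fb b) ≠ 0 := by
      intro h0; apply hb'; rw [h0]; simp
    have hne : (fb b).support.Nonempty := by
      by_contra hemp
      rw [Finset.not_nonempty_iff_eq_empty] at hemp
      exact h0 (by simp [l2sq, hemp])
    obtain ⟨a, ha⟩ := hne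
    have h1 : φ (a, b) ≠ 0 := by
      rw [← hfb]; exact Finsupp.mem_support_iff.1 ha
    exact Finset.mem_image.2 ⟨(a, b), Finsupp.mem_support_iff.2 h1, rfl⟩
  have hvF : ↑v.support ⊆ F := by
    intro b hb
    have hb' : v b ≠ 0 := Finsupp.mem_support_iff.1 hb
    rw [hvb b] at hb'
    have h0 : l2sq (fb b) ≠ 0 := by
      intro h0; apply hb'; rw [h0]; simp
    have hne : (fb b).support.Nonempty := by
      by_contra hemp
      rw [Finset.not_nonempty_iff_eq_empty] at hemp
      exact h0 (by simp [l2sq, hemp])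
    obtain ⟨a, ha⟩ := hne
    have h1 : φ (a, b) ≠ 0 := by
      rw [← hfb]; exact Finsupp.mem_support_iff.1 ha
    exact (hφ (Finsupp.mem_support_iff.2 h1)).2
  -- ℓ² masses
  have hl2 : l2sq φ = ∑ b ∈ B, l2sq (fb b) := by
    have h1 := sum_slices φ fb hfb (fun a b => ‖φ (a, b)‖ ^ 2)
    calc l2sq φ = ∑ x ∈ φ.support, ‖φ (x.1, x.2)‖ ^ 2 := by
          rw [l2sq]
      _ = ∑ b ∈ B, ∑ a ∈ (fb b).support, ‖φ (a, b)‖ ^ 2 := h1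
      _ = ∑ b ∈ B, l2sq (fb b) := by
          refine Finset.sum_congr rfl fun b _ => ?_
          rw [l2sq]
          exact Finset.sum_congr rfl fun a _ => by rw [hfb]
  have hl2v : l2sq v = l2sq φ := by
    rw [hl2, l2sq]
    rw [Finset.sum_subset hvB (fun b _ hb => by
      rw [Finsupp.notMem_support_iff.1 hb]; simp)]
    refine Finset.sum_congr rfl fun b _ => ?_
    rw [hvb b, Complex.norm_real, Real.norm_eq_abs, sq_abs]
    exact Real.sq_sqrt (l2sq_nonneg _)
  -- marginals of ω
  set T : H → ℝ := fun c => ∑' a, ‖ω (a, c)‖ ^ 2 with hT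
  have hTnn : ∀ c, 0 ≤ T c := fun c => tsum_nonneg fun a => by positivity
  have hslice : ∀ c : H, Summable fun a : G => ‖ω (a, c)‖ ^ 2 := fun c =>
    hω.comp_injective fun a a' haa => by simpa using congrArg Prod.fst haa
  set u : H → ℂ := fun c => ((Real.sqrt (T c) : ℝ) : ℂ) with hu
  have husq : ∀ c, ‖u c‖ ^ 2 = T c := by
    intro c
    rw [hu]
    rw [Complex.norm_real, Real.norm_eq_abs, sq_abs]
    exact Real.sq_sqrt (hTnn c)
  have hω2 : Summable fun y : H × G => ‖ω (y.2, y.1)‖ ^ 2 := hω.prod_symm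
  have husum : Summable fun c => ‖u c‖ ^ 2 := by
    simp only [husq]
    exact ((summable_prod_of_nonneg fun _ => by positivity).1 hω2).2
  have hωtot : ∑' c, T c = ∑' x : G × H, ‖ω x‖ ^ 2 := by
    rw [← (Equiv.prodComm H G).tsum_eq (fun x : G × H => ‖ω x‖ ^ 2)]
    exact (Summable.tsum_prod hω2).symm
  -- summability of the big convolution
  have hconv : Summable fun x : G × H => ‖conv φ ω x‖ ^ 2 := summable_conv φ ω hω
  have hconv2 : Summable fun y : H × G => ‖conv φ ω (y.2, y.1)‖ ^ 2 := hconv.prod_symm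
  have hconvtot : ∑' x : G × H, ‖conv φ ω x‖ ^ 2
      = ∑' h, ∑' g, ‖conv φ ω (g, h)‖ ^ 2 := by
    rw [← (Equiv.prodComm H G).tsum_eq (fun x : G × H => ‖conv φ ω x‖ ^ 2)]
    exact Summable.tsum_prod hconv2
  -- pointwise slice decomposition of the convolution
  have hpoint : ∀ (g : G) (h : H), conv φ ω (g, h)
      = ∑ b ∈ B, conv (fb b) (fun a => ω (a, b⁻¹ * h)) g := by
    intro g h
    have h1 := sum_slices φ fb hfb (fun a b => φ (a, b) * ω (a⁻¹ * g, b⁻¹ * h))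
    calc conv φ ω (g, h)
        = ∑ x ∈ φ.support, φ (x.1, x.2) * ω (x.1⁻¹ * g, x.2⁻¹ * h) := by
          rw [conv]
          exact Finset.sum_congr rfl fun x _ => rfl
      _ = ∑ b ∈ B, ∑ a ∈ (fb b).support, φ (a, b) * ω (a⁻¹ * g, b⁻¹ * h) := h1
      _ = ∑ b ∈ B, conv (fb b) (fun a => ω (a, b⁻¹ * h)) g := by
          refine Finset.sum_congr rfl fun b _ => ?_
          rw [conv]
          exact Finset.sum_congr rfl fun a _ => by rw [hfb]
  -- the key per-fiber estimate
  set R : H → ℝ := fun h => ∑ b ∈ B, Real.sqrt (l2sq (fb b)) * Real.sqrt (T (b⁻¹ * h))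
    with hR
  have hRnn : ∀ h, 0 ≤ R h := fun h =>
    Finset.sum_nonneg fun b _ => mul_nonneg (Real.sqrt_nonneg _) (Real.sqrt_nonneg _)
  have stepA : ∀ h : H, ∑' g, ‖conv φ ω (g, h)‖ ^ 2 ≤ p ^ 2 * R h ^ 2 := by
    intro h
    have hSh : Summable fun g => ‖conv φ ω (g, h)‖ ^ 2 :=
      hconv.comp_injective fun g g' hgg => by simpa using congrArg Prod.fst hgg
    set Sh := toL2 (fun g => conv φ ω (g, h)) hSh with hShdef
    set Cb : H → lp (fun _ : G => ℂ) 2 := fun b =>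
      toL2 (conv (fb b) (fun a => ω (a, b⁻¹ * h))) (summable_conv _ _ (hslice _)) with hCb
    have hSsum : Sh = ∑ b ∈ B, Cb b := by
      apply lp.ext
      rw [lp.coeFn_sum]
      funext g
      rw [Finset.sum_apply]
      exact hpoint g h
    have hnorm : ‖Sh‖ ≤ p * R h := by
      rw [hSsum]
      calc ‖∑ b ∈ B, Cb b‖ ≤ ∑ b ∈ B, ‖Cb b‖ := norm_sum_le _ _
        _ ≤ ∑ b ∈ B, p * (Real.sqrt (l2sq (fb b)) * Real.sqrt (T (b⁻¹ * h))) := by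
            refine Finset.sum_le_sum fun b _ => ?_
            have hb2 : ‖Cb b‖ ^ 2
                ≤ (p * (Real.sqrt (l2sq (fb b)) * Real.sqrt (T (b⁻¹ * h)))) ^ 2 := by
              rw [hCb, norm_toL2_sq]
              have h3 := hG (fb b) (hsuppE b) (fun a => ω (a, b⁻¹ * h)) (hslice _)
              calc ∑' g, ‖conv (fb b) (fun a => ω (a, b⁻¹ * h)) g‖ ^ 2
                  ≤ p ^ 2 * l2sq (fb b) * T (b⁻¹ * h) := h3
                _ = (p * (Real.sqrt (l2sq (fb b)) * Real.sqrt (T (b⁻¹ * h)))) ^ 2 := by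
                    rw [mul_pow, mul_pow, Real.sq_sqrt (l2sq_nonneg _),
                      Real.sq_sqrt (hTnn _)]
                    ring
            exact le_of_pow_le_pow_left₀ two_ne_zero (by positivity) hb2
        _ = p * R h := by rw [hR, Finset.mul_sum]
    have h4 : ‖Sh‖ ^ 2 ≤ (p * R h) ^ 2 := pow_le_pow_left₀ (norm_nonneg _) hnorm 2
    rw [hShdef, norm_toL2_sq] at h4
    calc ∑' g, ‖conv φ ω (g, h)‖ ^ 2 ≤ (p * R h) ^ 2 := h4
      _ = p ^ 2 * R h ^ 2 := by ring
  -- identification of R with the H-convolution of v and u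
  have hRconv : ∀ h : H, conv v u h = ((R h : ℝ) : ℂ) := by
    intro h
    rw [conv]
    rw [Finset.sum_subset hvB (fun b _ hb => by
      rw [Finsupp.notMem_support_iff.1 hb]; simp)]
    rw [hR]
    push_cast
    refine Finset.sum_congr rfl fun b _ => ?_
    rw [hvb b, hu]
  have hRnorm : ∀ h : H, ‖conv v u h‖ = R h := by
    intro h
    rw [hRconv h, Complex.norm_real, Real.norm_eq_abs, abs_of_nonneg (hRnn h)]
  -- summabilities for the final chain
  have hcv : Summable fun h => ‖conv v u h‖ ^ 2 := summable_conv v u husum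
  have hsum1 : Summable fun h : H => ∑' g, ‖conv φ ω (g, h)‖ ^ 2 :=
    ((summable_prod_of_nonneg fun _ => by positivity).1 hconv2).2
  have hB2 := hH v hvF u husum
  -- final chain
  calc ∑' x : G × H, ‖conv φ ω x‖ ^ 2
      = ∑' h, ∑' g, ‖conv φ ω (g, h)‖ ^ 2 := hconvtot
    _ ≤ ∑' h, p ^ 2 * ‖conv v u h‖ ^ 2 := by
        refine Summable.tsum_le_tsum (fun h => ?_) hsum1 (hcv.mul_left _)
        rw [hRnorm h]
        exact stepA h
    _ = p ^ 2 * ∑' h, ‖conv v u h‖ ^ 2 := tsum_mul_left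
    _ ≤ p ^ 2 * (q ^ 2 * l2sq v * ∑' c, ‖u c‖ ^ 2) := by
        exact mul_le_mul_of_nonneg_left hB2 (by positivity)
    _ = (p * q) ^ 2 * l2sq φ * ∑' x : G × H, ‖ω x‖ ^ 2 := by
        rw [hl2v]
        have : ∑' c, ‖u c‖ ^ 2 = ∑' x : G × H, ‖ω x‖ ^ 2 := by
          simp only [husq]; exact hωtot
        rw [this]
        ring
end

section
/- Let G be a finitely generated group and S = {g₁,…,g_N} a minimal generating set for G (i.e. |S| = rank(G), the smallest cardinality of a generating set). Assume that the ball B₂^G of radius 2 in the word metric with respect to S contains no element of order two. Then for every g ∈ G with g ≠ e, the number of pairs (s,t) ∈ S × S with s⁻¹t = g is at most 1; that is, ℕ_{S,G} := max_{g≠e} |{(s,t) ∈ S×S : s⁻¹t = g}| = 1. -/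
open scoped Classical

/-- The ball of radius 2 in the word metric of `G` with respect to a generating
set `S`: products of at most two elements of `S ∪ S⁻¹`. -/
def ballTwo {G : Type*} [Group G] (S : Set G) : Set G :=
  {g : G | ∃ l : List G, l.length ≤ 2 ∧ (∀ x ∈ l, x ∈ S ∨ x⁻¹ ∈ S) ∧ l.prod = g}

private lemma removeGen {G : Type*} [Group G] (S : Finset G)
    (hgen : Subgroup.closure (S : Set G) = ⊤)
    (hmin : ∀ T : Finset G, Subgroup.closure (T : Set G) = ⊤ → S.card ≤ T.card)
    (x : G) (hx : x ∈ S)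
    (hmem : x ∈ Subgroup.closure ((S.erase x : Finset G) : Set G)) : False := by
  have htop : Subgroup.closure ((S.erase x : Finset G) : Set G) = ⊤ := by
    rw [eq_top_iff, ← hgen, Subgroup.closure_le]
    intro y hy
    by_cases hyx : y = x
    · subst hyx; exact hmem
    · exact Subgroup.subset_closure (Finset.mem_coe.mpr (Finset.mem_erase.mpr ⟨hyx, hy⟩))
  have h1 := hmin _ htop
  have h2 : (S.erase x).card < S.card := Finset.card_erase_lt_of_mem hx
  omega

/-- If `S` is a minimal finite generating set of `G` (not containing `e`)
and the ball `B₂^G` contains no element of order two, then for every `g ≠ e` there is at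
most one pair `(s,t) ∈ S × S` with `s⁻¹t = g`; i.e. `ℕ_{S,G} = 1`. -/
theorem stmt4 {G : Type*} [Group G] (S : Finset G)
    (hS1 : (1 : G) ∉ S)
    (hgen : Subgroup.closure (S : Set G) = ⊤)
    (hmin : ∀ T : Finset G, Subgroup.closure (T : Set G) = ⊤ → S.card ≤ T.card)
    (hno2 : ∀ g ∈ ballTwo (S : Set G), g ^ 2 = 1 → g = 1) :
    ∀ g : G, g ≠ 1 →
      ((S ×ˢ S).filter (fun st : G × G => st.1⁻¹ * st.2 = g)).card ≤ 1 := by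
  intro g hg
  by_contra h
  push_neg at h
  rw [Finset.one_lt_card] at h
  obtain ⟨a, ha, b, hb, hab⟩ := h
  simp only [Finset.mem_filter, Finset.mem_product] at ha hb
  obtain ⟨⟨hs, ht⟩, heq1⟩ := ha
  obtain ⟨⟨hs', ht'⟩, heq2⟩ := hb
  set s := a.1 with hsd
  set t := a.2 with htd
  set s' := b.1 with hsd'
  set t' := b.2 with htd'
  -- basic inequalities
  have hst : s ≠ t := by
    intro hh; apply hg; rw [← heq1, hh, inv_mul_cancel]
  have hst' : s' ≠ t' := by
    intro hh; apply hg; rw [← heq2, hh, inv_mul_cancel]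
  have hss' : s ≠ s' := by
    intro hh
    apply hab
    have : t = t' := by
      have := heq1.trans heq2.symm
      rw [hh] at this
      exact mul_left_cancel this
    exact Prod.ext hh this
  have htt' : t ≠ t' := by
    intro hh
    apply hab
    have : s = s' := by
      have := heq1.trans heq2.symm
      rw [hh] at this
      have h2 : s⁻¹ = s'⁻¹ := mul_right_cancel this
      exact inv_injective h2
    exact Prod.ext this hh
  by_cases hts : t' = s
  · by_cases hst2 : s' = t
    · -- g has order two and lies in the ball of radius 2
      have hg2 : g ^ 2 = 1 := by
        have hgg : g * g = (s'⁻¹ * t') * (s⁻¹ * t) := by rw [heq1, heq2]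
        rw [hts, hst2] at hgg
        rw [pow_two, hgg]; group
      have hball : g ∈ ballTwo (S : Set G) := by
        refine ⟨[s⁻¹, t], by simp, ?_, ?_⟩
        · intro x hx
          simp only [List.mem_cons, List.mem_singleton] at hx
          rcases hx with rfl | hx
          · right; simpa using hs
          · simp only [List.mem_singleton, List.not_mem_nil, or_false] at hx
            subst hx; left; exact ht
        · simp [heq1]
      exact hg (hno2 g hball hg2)
    · -- t = s * s'⁻¹ * s, so t is redundant
      have hexp : t = s * s'⁻¹ * s := by
        have := heq1.trans heq2.symm
        rw [hts] at this
        -- s⁻¹ * t = s'⁻¹ * s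
        calc t = s * (s⁻¹ * t) := by group
          _ = s * (s'⁻¹ * s) := by rw [this]
          _ = s * s'⁻¹ * s := by group
      refine removeGen S hgen hmin t ht ?_
      have hsmem : s ∈ (S.erase t : Finset G) := Finset.mem_erase.mpr ⟨hst, hs⟩
      have hsmem' : s' ∈ (S.erase t : Finset G) := Finset.mem_erase.mpr ⟨hst2, hs'⟩
      have key : s * s'⁻¹ * s ∈ Subgroup.closure ((S.erase t : Finset G) : Set G) :=
        mul_mem (mul_mem (Subgroup.subset_closure hsmem)
          (inv_mem (Subgroup.subset_closure hsmem'))) (Subgroup.subset_closure hsmem)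
      rwa [← hexp] at key
  · -- t' = s' * s⁻¹ * t, so t' is redundant
    have hexp : t' = s' * s⁻¹ * t := by
      have := heq2.trans heq1.symm
      calc t' = s' * (s'⁻¹ * t') := by group
        _ = s' * (s⁻¹ * t) := by rw [this]
        _ = s' * s⁻¹ * t := by group
    refine removeGen S hgen hmin t' ht' ?_
    have h1 : s' ∈ (S.erase t' : Finset G) := Finset.mem_erase.mpr ⟨hst', hs'⟩
    have h2 : s ∈ (S.erase t' : Finset G) := Finset.mem_erase.mpr ⟨fun hh => hts hh.symm, hs⟩
    have h3 : t ∈ (S.erase t' : Finset G) := Finset.mem_erase.mpr ⟨htt', ht⟩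
    have key : s' * s⁻¹ * t ∈ Subgroup.closure ((S.erase t' : Finset G) : Set G) :=
      mul_mem (mul_mem (Subgroup.subset_closure h1)
        (inv_mem (Subgroup.subset_closure h2))) (Subgroup.subset_closure h3)
    rwa [← hexp] at key
end

section
/- Let G be a group with minimal generating set S = {g₁,…,g_N} (|S| = rank(G)). If g_i⁻¹ g_j = g_k⁻¹ g_l ≠ e for some indices 1 ≤ i,j,k,l ≤ N with (i,j) ≠ (k,l), then g_i = g_l, g_j = g_k, and the element g_i⁻¹ g_j has order two. -/
private lemma erase_gen_contra {G : Type*} [Group G] [DecidableEq G] (S : Finset G)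
    (hgen : Subgroup.closure (S : Set G) = ⊤)
    (hmin : ∀ T : Finset G, Subgroup.closure (T : Set G) = ⊤ → S.card ≤ T.card)
    (x : G) (hx : x ∈ S)
    (hmem : x ∈ Subgroup.closure ((S.erase x : Finset G) : Set G)) : False := by
  have hgen' : Subgroup.closure ((S.erase x : Finset G) : Set G) = ⊤ := by
    rw [eq_top_iff, ← hgen, Subgroup.closure_le]
    intro s hs
    rcases eq_or_ne s x with rfl | hne
    · exact hmem
    · exact Subgroup.subset_closure (by simp [Finset.mem_erase, hne, hs])
  have h1 := hmin _ hgen'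
  have h2 : (S.erase x).card < S.card := Finset.card_erase_lt_of_mem hx
  omega

/-- Let `S` be a minimal generating set of `G`. If
`a⁻¹b = c⁻¹d ≠ e` for elements `a, b, c, d ∈ S` with `(a,b) ≠ (c,d)`, then
`a = d`, `b = c`, and `a⁻¹b` has order two. -/
theorem stmt5 {G : Type*} [Group G] (S : Finset G)
    (hgen : Subgroup.closure (S : Set G) = ⊤)
    (hmin : ∀ T : Finset G, Subgroup.closure (T : Set G) = ⊤ → S.card ≤ T.card)
    (a b c d : G) (ha : a ∈ S) (hb : b ∈ S) (hc : c ∈ S) (hd : d ∈ S)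
    (heq : a⁻¹ * b = c⁻¹ * d) (hne : a⁻¹ * b ≠ 1)
    (hpair : (a, b) ≠ (c, d)) :
    a = d ∧ b = c ∧ (a⁻¹ * b) ^ 2 = 1 := by
  classical
  have hac : a ≠ c := by
    rintro rfl
    exact hpair (by rw [mul_left_cancel heq])
  have hda : d = a := by
    by_contra hda
    have hdb : d ≠ b := by
      rintro rfl
      exact hac (inv_injective (mul_right_cancel heq))
    have hdc : d ≠ c := by
      rintro rfl
      exact hne (by rw [heq, inv_mul_cancel])
    refine erase_gen_contra S hgen hmin d hd ?_
    have hd' : d = c * a⁻¹ * b := by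
      rw [mul_assoc, heq]; group
    have mem : ∀ y : G, y ∈ S → y ≠ d → y ∈ Subgroup.closure ((S.erase d : Finset G) : Set G) :=
      fun y hy hyd => Subgroup.subset_closure (by simp [Finset.mem_erase, hyd, hy])
    have key : c * a⁻¹ * b ∈ Subgroup.closure ((S.erase d : Finset G) : Set G) :=
      mul_mem (mul_mem (mem c hc hdc.symm) (inv_mem (mem a ha (Ne.symm hda))))
        (mem b hb hdb.symm)
    rwa [← hd'] at key
  have hcb : c = b := by
    by_contra hcb
    refine erase_gen_contra S hgen hmin c hc ?_
    have h1 : c * (a⁻¹ * b) = a := by rw [heq, hda]; group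
    have hc' : c = a * b⁻¹ * a := mul_right_cancel (b := a⁻¹ * b) (by rw [h1]; group)
    have mem : ∀ y : G, y ∈ S → y ≠ c → y ∈ Subgroup.closure ((S.erase c : Finset G) : Set G) :=
      fun y hy hyc => Subgroup.subset_closure (by simp [Finset.mem_erase, hyc, hy])
    have key : a * b⁻¹ * a ∈ Subgroup.closure ((S.erase c : Finset G) : Set G) :=
      mul_mem (mul_mem (mem a ha hac) (inv_mem (mem b hb (Ne.symm hcb))))
        (mem a ha hac)
    rwa [← hc'] at key
  refine ⟨hda.symm, hcb.symm, ?_⟩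
  have hflip : a⁻¹ * b = b⁻¹ * a := by rw [heq, hcb, hda]
  rw [pow_two]
  nth_rewrite 2 [hflip]
  group
end

section
/- Let G₁ and G₂ be groups and G = G₁ * G₂ their free product. If a, b, c, d ∈ G₁ ∪ G₂ (viewed in G) satisfy a⁻¹b = c⁻¹d ≠ e, then either (a,b) = (c,d), or a = d, b = c and (a⁻¹b)² = e, or all four elements a, b, c, d lie in the same factor G_i. -/
open Monoid Coprod

namespace Stmt8Aux
open Monoid.CoprodI

section coprodI
variable {ι : Type*} {M : ι → Type*} [∀ i, Monoid (M i)]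

theorem prod_injective : Function.Injective (Word.prod : Word M → CoprodI M) := by
  classical
  exact fun w₁ w₂ h => Word.equiv.symm.injective h

theorem two_ne_single {i j k : ι} (hij : i ≠ j) {x : M i} {y : M j} {z : M k}
    (hx : x ≠ 1) (hy : y ≠ 1) :
    CoprodI.of x * CoprodI.of y ≠ CoprodI.of z := by
  classical
  intro h
  have hw : (Word.mk [⟨i, x⟩, ⟨j, y⟩]
      (by rintro l hl; simp only [List.mem_cons, List.not_mem_nil, or_false] at hl; rcases hl with rfl | rfl <;> assumption)
      (by simp [hij])).prod = CoprodI.of x * CoprodI.of y := by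
    simp [Word.prod]
  by_cases hz : z = 1
  · subst hz
    rw [map_one] at h
    have := prod_injective (M := M) (hw.trans (h.trans Word.prod_empty.symm))
    exact absurd (congrArg (List.length ∘ Word.toList) this) (by simp [Word.empty])
  · have hw2 : (Word.mk [⟨k, z⟩]
        (by rintro l hl; simp only [List.mem_cons, List.not_mem_nil, or_false] at hl; subst hl; assumption)
        (by simp)).prod = CoprodI.of z := by
      simp [Word.prod]
    have := prod_injective (M := M) (hw.trans (h.trans hw2.symm))
    exact absurd (congrArg (List.length ∘ Word.toList) this) (by simp)

theorem two_eq_two {i j : ι} (hij : i ≠ j) {x u : M i} {y v : M j}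
    (hx : x ≠ 1) (hy : y ≠ 1) (hu : u ≠ 1) (hv : v ≠ 1)
    (h : CoprodI.of x * CoprodI.of y = CoprodI.of u * CoprodI.of v) :
    x = u ∧ y = v := by
  classical
  have hw : (Word.mk [⟨i, x⟩, ⟨j, y⟩]
      (by rintro l hl; simp only [List.mem_cons, List.not_mem_nil, or_false] at hl; rcases hl with rfl | rfl <;> assumption)
      (by simp [hij])).prod = CoprodI.of x * CoprodI.of y := by
    simp [Word.prod]
  have hw2 : (Word.mk [⟨i, u⟩, ⟨j, v⟩]
      (by rintro l hl; simp only [List.mem_cons, List.not_mem_nil, or_false] at hl; rcases hl with rfl | rfl <;> assumption)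
      (by simp [hij])).prod = CoprodI.of u * CoprodI.of v := by
    simp [Word.prod]
  have := congrArg Word.toList (prod_injective (M := M) (hw.trans (h.trans hw2.symm)))
  simp at this
  exact ⟨this.1, this.2⟩

theorem two_ne_two' {i j : ι} (hij : i ≠ j) {x : M i} {y : M j} {u : M j} {v : M i}
    (hx : x ≠ 1) (hy : y ≠ 1) (hu : u ≠ 1) (hv : v ≠ 1) :
    CoprodI.of x * CoprodI.of y ≠ CoprodI.of u * CoprodI.of v := by
  classical
  intro h
  have hw : (Word.mk [⟨i, x⟩, ⟨j, y⟩]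
      (by rintro l hl; simp only [List.mem_cons, List.not_mem_nil, or_false] at hl; rcases hl with rfl | rfl <;> assumption)
      (by simp [hij])).prod = CoprodI.of x * CoprodI.of y := by
    simp [Word.prod]
  have hw2 : (Word.mk [⟨j, u⟩, ⟨i, v⟩]
      (by rintro l hl; simp only [List.mem_cons, List.not_mem_nil, or_false] at hl; rcases hl with rfl | rfl <;> assumption)
      (by simp [hij.symm])).prod = CoprodI.of u * CoprodI.of v := by
    simp [Word.prod]
  have := congrArg Word.toList (prod_injective (M := M) (hw.trans (h.trans hw2.symm)))
  simp at this
  exact hij this.1.1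

end coprodI

/-- The two-factor family indexing the free product. -/
def Fac (G₁ : Type u) (G₂ : Type v) : Bool → Type (max u v)
  | false => ULift G₁
  | true => ULift G₂

instance {G₁ : Type u} {G₂ : Type v} [Group G₁] [Group G₂] : ∀ b, Group (Fac G₁ G₂ b)
  | false => inferInstanceAs (Group (ULift G₁))
  | true => inferInstanceAs (Group (ULift G₂))

variable {G₁ : Type u} {G₂ : Type v} [Group G₁] [Group G₂]

/-- The comparison homomorphism from `Coprod` to `CoprodI`. -/
def phi : G₁ ∗ G₂ →* CoprodI (Fac G₁ G₂) :=
  Coprod.lift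
    ((CoprodI.of (i := false)).comp (MulEquiv.ulift.symm : G₁ ≃* ULift G₁).toMonoidHom)
    ((CoprodI.of (i := true)).comp (MulEquiv.ulift.symm : G₂ ≃* ULift G₂).toMonoidHom)

theorem phi_inl (x : G₁) :
    phi (inl x : G₁ ∗ G₂) = CoprodI.of (M := Fac G₁ G₂) (i := false) (ULift.up x) := rfl

theorem phi_inr (y : G₂) :
    phi (inr y : G₁ ∗ G₂) = CoprodI.of (M := Fac G₁ G₂) (i := true) (ULift.up y) := rfl

theorem up_ne_one₁ {x : G₁} (hx : x ≠ 1) : (ULift.up x : Fac G₁ G₂ false) ≠ 1 :=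
  fun h => hx (congrArg ULift.down h)

theorem up_ne_one₂ {y : G₂} (hy : y ≠ 1) : (ULift.up y : Fac G₁ G₂ true) ≠ 1 :=
  fun h => hy (congrArg ULift.down h)

theorem inl_eq_inr {x : G₁} {y : G₂} (h : (inl x : G₁ ∗ G₂) = inr y) : x = 1 ∧ y = 1 := by
  constructor
  · have h1 := congrArg (⇑(Coprod.fst : G₁ ∗ G₂ →* G₁)) h
    simpa using h1
  · have h1 := congrArg (⇑(Coprod.snd : G₁ ∗ G₂ →* G₂)) h
    simpa using h1.symm

/-- Classification of a pair of elements of the union of the factors. -/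
theorem pair_class {x y : G₁ ∗ G₂}
    (hx : x ∈ Set.range (inl : G₁ →* G₁ ∗ G₂) ∪ Set.range (inr : G₂ →* G₁ ∗ G₂))
    (hy : y ∈ Set.range (inl : G₁ →* G₁ ∗ G₂) ∪ Set.range (inr : G₂ →* G₁ ∗ G₂)) :
    (x ∈ Set.range (inl : G₁ →* G₁ ∗ G₂) ∧ y ∈ Set.range (inl : G₁ →* G₁ ∗ G₂))
    ∨ (x ∈ Set.range (inr : G₂ →* G₁ ∗ G₂) ∧ y ∈ Set.range (inr : G₂ →* G₁ ∗ G₂))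
    ∨ (∃ x₀ y₀, x = inl x₀ ∧ y = inr y₀ ∧ x₀ ≠ 1 ∧ y₀ ≠ 1)
    ∨ (∃ x₀ y₀, x = inr x₀ ∧ y = inl y₀ ∧ x₀ ≠ 1 ∧ y₀ ≠ 1) := by
  have one_inl : (1 : G₁ ∗ G₂) ∈ Set.range (inl : G₁ →* G₁ ∗ G₂) := ⟨1, map_one _⟩
  have one_inr : (1 : G₁ ∗ G₂) ∈ Set.range (inr : G₂ →* G₁ ∗ G₂) := ⟨1, map_one _⟩
  rcases hx with ⟨x₀, rfl⟩ | ⟨x₀, rfl⟩ <;> rcases hy with ⟨y₀, rfl⟩ | ⟨y₀, rfl⟩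
  · exact Or.inl ⟨⟨x₀, rfl⟩, ⟨y₀, rfl⟩⟩
  · by_cases hx0 : x₀ = 1
    · subst hx0
      exact Or.inr (Or.inl ⟨by rw [map_one]; exact one_inr, ⟨y₀, rfl⟩⟩)
    · by_cases hy0 : y₀ = 1
      · subst hy0
        exact Or.inl ⟨⟨x₀, rfl⟩, by rw [map_one]; exact one_inl⟩
      · exact Or.inr (Or.inr (Or.inl ⟨x₀, y₀, rfl, rfl, hx0, hy0⟩))
  · by_cases hx0 : x₀ = 1
    · subst hx0
      exact Or.inl ⟨by rw [map_one]; exact one_inl, ⟨y₀, rfl⟩⟩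
    · by_cases hy0 : y₀ = 1
      · subst hy0
        exact Or.inr (Or.inl ⟨⟨x₀, rfl⟩, by rw [map_one]; exact one_inr⟩)
      · exact Or.inr (Or.inr (Or.inr ⟨x₀, y₀, rfl, rfl, hx0, hy0⟩))
  · exact Or.inr (Or.inl ⟨⟨x₀, rfl⟩, ⟨y₀, rfl⟩⟩)

theorem same_inl {a b c d : G₁ ∗ G₂}
    (ha : a ∈ Set.range (inl : G₁ →* G₁ ∗ G₂)) (hb : b ∈ Set.range (inl : G₁ →* G₁ ∗ G₂))
    (hc : c ∈ Set.range (inl : G₁ →* G₁ ∗ G₂) ∪ Set.range (inr : G₂ →* G₁ ∗ G₂))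
    (hd : d ∈ Set.range (inl : G₁ →* G₁ ∗ G₂) ∪ Set.range (inr : G₂ →* G₁ ∗ G₂))
    (heq : a⁻¹ * b = c⁻¹ * d) (hne : a⁻¹ * b ≠ 1) :
    c ∈ Set.range (inl : G₁ →* G₁ ∗ G₂) ∧ d ∈ Set.range (inl : G₁ →* G₁ ∗ G₂) := by
  obtain ⟨a₀, rfl⟩ := ha
  obtain ⟨b₀, rfl⟩ := hb
  rcases hc with ⟨c₀, rfl⟩ | ⟨c₀, rfl⟩
  · refine ⟨⟨c₀, rfl⟩, ?_⟩
    have hd' : d = inl c₀ * ((inl a₀)⁻¹ * inl b₀) := by rw [heq, mul_inv_cancel_left]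
    exact ⟨c₀ * (a₀⁻¹ * b₀), by rw [map_mul, map_mul, map_inv]; exact hd'.symm⟩
  · rcases hd with ⟨d₀, rfl⟩ | ⟨d₀, rfl⟩
    · refine ⟨?_, ⟨d₀, rfl⟩⟩
      have hc' : (inr c₀ : G₁ ∗ G₂) = inl d₀ * ((inl a₀)⁻¹ * inl b₀)⁻¹ := by
        rw [heq]
        group
      exact ⟨d₀ * (a₀⁻¹ * b₀)⁻¹, by rw [map_mul, map_inv, map_mul, map_inv]; exact hc'.symm⟩
    · exfalso
      rw [← map_inv, ← map_mul, ← map_inv, ← map_mul] at heq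
      have := (inl_eq_inr heq).1
      apply hne
      rw [← map_inv, ← map_mul, this, map_one]

theorem same_inr {a b c d : G₁ ∗ G₂}
    (ha : a ∈ Set.range (inr : G₂ →* G₁ ∗ G₂)) (hb : b ∈ Set.range (inr : G₂ →* G₁ ∗ G₂))
    (hc : c ∈ Set.range (inl : G₁ →* G₁ ∗ G₂) ∪ Set.range (inr : G₂ →* G₁ ∗ G₂))
    (hd : d ∈ Set.range (inl : G₁ →* G₁ ∗ G₂) ∪ Set.range (inr : G₂ →* G₁ ∗ G₂))
    (heq : a⁻¹ * b = c⁻¹ * d) (hne : a⁻¹ * b ≠ 1) :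
    c ∈ Set.range (inr : G₂ →* G₁ ∗ G₂) ∧ d ∈ Set.range (inr : G₂ →* G₁ ∗ G₂) := by
  obtain ⟨a₀, rfl⟩ := ha
  obtain ⟨b₀, rfl⟩ := hb
  rcases hc with ⟨c₀, rfl⟩ | ⟨c₀, rfl⟩
  · rcases hd with ⟨d₀, rfl⟩ | ⟨d₀, rfl⟩
    · exfalso
      rw [← map_inv, ← map_mul, ← map_inv, ← map_mul] at heq
      have := (inl_eq_inr heq.symm).2
      apply hne
      rw [← map_inv, ← map_mul, this, map_one]
    · refine ⟨?_, ⟨d₀, rfl⟩⟩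
      have hc' : (inl c₀ : G₁ ∗ G₂) = inr d₀ * ((inr a₀)⁻¹ * inr b₀)⁻¹ := by
        rw [heq]
        group
      exact ⟨d₀ * (a₀⁻¹ * b₀)⁻¹, by rw [map_mul, map_inv, map_mul, map_inv]; exact hc'.symm⟩
  · refine ⟨⟨c₀, rfl⟩, ?_⟩
    have hd' : d = inr c₀ * ((inr a₀)⁻¹ * inr b₀) := by rw [heq, mul_inv_cancel_left]
    exact ⟨c₀ * (a₀⁻¹ * b₀), by rw [map_mul, map_mul, map_inv]; exact hd'.symm⟩

end Stmt8Aux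

open Stmt8Aux in
/-- In a free product `G = G₁ * G₂`, if `a, b, c, d ∈ G₁ ∪ G₂`
satisfy `a⁻¹b = c⁻¹d ≠ e`, then either `(a,b) = (c,d)`, or `a = d`, `b = c` and
`(a⁻¹b)² = e`, or all four elements lie in a common factor. -/
theorem stmt8 {G₁ G₂ : Type*} [Group G₁] [Group G₂]
    (a b c d : G₁ ∗ G₂)
    (hmem : ∀ x ∈ ({a, b, c, d} : Set (G₁ ∗ G₂)),
      x ∈ Set.range (inl : G₁ →* G₁ ∗ G₂) ∪ Set.range (inr : G₂ →* G₁ ∗ G₂))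
    (heq : a⁻¹ * b = c⁻¹ * d) (hne : a⁻¹ * b ≠ 1) :
    (a = c ∧ b = d)
    ∨ (a = d ∧ b = c ∧ (a⁻¹ * b) ^ 2 = 1)
    ∨ (∀ x ∈ ({a, b, c, d} : Set (G₁ ∗ G₂)), x ∈ Set.range (inl : G₁ →* G₁ ∗ G₂))
    ∨ (∀ x ∈ ({a, b, c, d} : Set (G₁ ∗ G₂)), x ∈ Set.range (inr : G₂ →* G₁ ∗ G₂)) := by
  have ha := hmem a (by simp)
  have hb := hmem b (by simp)
  have hc := hmem c (by simp)
  have hd := hmem d (by simp)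
  have ftne : (false : Bool) ≠ true := Bool.false_ne_true
  rcases pair_class ha hb with ⟨ha', hb'⟩ | ⟨ha', hb'⟩ |
      ⟨a₀, b₀, rfl, rfl, ha0, hb0⟩ | ⟨a₀, b₀, rfl, rfl, ha0, hb0⟩
  · -- a, b ∈ range inl
    obtain ⟨hc', hd'⟩ := same_inl ha' hb' hc hd heq hne
    refine Or.inr (Or.inr (Or.inl ?_))
    intro x hx
    rcases hx with rfl | rfl | rfl | rfl <;> assumption
  · obtain ⟨hc', hd'⟩ := same_inr ha' hb' hc hd heq hne
    refine Or.inr (Or.inr (Or.inr ?_))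
    intro x hx
    rcases hx with rfl | rfl | rfl | rfl <;> assumption
  · -- a = inl a₀, b = inr b₀, nontrivial
    have ha0' : a₀⁻¹ ≠ 1 := inv_ne_one.mpr ha0
    rcases pair_class hc hd with ⟨hc', hd'⟩ | ⟨hc', hd'⟩ |
        ⟨c₀, d₀, rfl, rfl, hc0, hd0⟩ | ⟨c₀, d₀, rfl, rfl, hc0, hd0⟩
    · -- c, d ∈ range inl : contradiction
      exfalso
      obtain ⟨c₀, rfl⟩ := hc'
      obtain ⟨d₀, rfl⟩ := hd'
      simp only [← map_inv, ← map_mul] at heq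
      have h2 := congrArg phi heq
      rw [map_mul, phi_inl, phi_inr, phi_inl] at h2
      exact two_ne_single ftne (up_ne_one₁ ha0') (up_ne_one₂ hb0) h2
    · exfalso
      obtain ⟨c₀, rfl⟩ := hc'
      obtain ⟨d₀, rfl⟩ := hd'
      simp only [← map_inv, ← map_mul] at heq
      have h2 := congrArg phi heq
      rw [map_mul, phi_inl, phi_inr, phi_inr] at h2
      exact two_ne_single ftne (up_ne_one₁ ha0') (up_ne_one₂ hb0) h2
    · -- c = inl c₀, d = inr d₀
      have hc0' : c₀⁻¹ ≠ 1 := inv_ne_one.mpr hc0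
      simp only [← map_inv] at heq
      have h2 := congrArg phi heq
      rw [map_mul, map_mul, phi_inl, phi_inr, phi_inl, phi_inr] at h2
      obtain ⟨h3, h4⟩ := two_eq_two ftne (up_ne_one₁ ha0') (up_ne_one₂ hb0)
        (up_ne_one₁ hc0') (up_ne_one₂ hd0) h2
      have e1 : a₀⁻¹ = c₀⁻¹ := congrArg ULift.down h3
      have e2 : b₀ = d₀ := congrArg ULift.down h4
      exact Or.inl ⟨by rw [inv_injective e1], by rw [e2]⟩
    · -- c = inr c₀, d = inl d₀ : impossible
      exfalso
      have hc0' : c₀⁻¹ ≠ 1 := inv_ne_one.mpr hc0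
      simp only [← map_inv] at heq
      have h2 := congrArg phi heq
      rw [map_mul, map_mul, phi_inl, phi_inr, phi_inr, phi_inl] at h2
      exact two_ne_two' ftne (up_ne_one₁ ha0') (up_ne_one₂ hb0)
        (up_ne_one₂ hc0') (up_ne_one₁ hd0) h2
  · -- a = inr a₀, b = inl b₀, nontrivial
    have ha0' : a₀⁻¹ ≠ 1 := inv_ne_one.mpr ha0
    rcases pair_class hc hd with ⟨hc', hd'⟩ | ⟨hc', hd'⟩ |
        ⟨c₀, d₀, rfl, rfl, hc0, hd0⟩ | ⟨c₀, d₀, rfl, rfl, hc0, hd0⟩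
    · exfalso
      obtain ⟨c₀, rfl⟩ := hc'
      obtain ⟨d₀, rfl⟩ := hd'
      simp only [← map_inv, ← map_mul] at heq
      have h2 := congrArg phi heq
      rw [map_mul, phi_inl, phi_inr, phi_inl] at h2
      exact two_ne_single ftne.symm (up_ne_one₂ ha0') (up_ne_one₁ hb0) h2
    · exfalso
      obtain ⟨c₀, rfl⟩ := hc'
      obtain ⟨d₀, rfl⟩ := hd'
      simp only [← map_inv, ← map_mul] at heq
      have h2 := congrArg phi heq
      rw [map_mul, phi_inr, phi_inl, phi_inr] at h2
      exact two_ne_single ftne.symm (up_ne_one₂ ha0') (up_ne_one₁ hb0) h2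
    · -- c = inl c₀, d = inr d₀ : impossible
      exfalso
      have hc0' : c₀⁻¹ ≠ 1 := inv_ne_one.mpr hc0
      simp only [← map_inv] at heq
      have h2 := congrArg phi heq
      rw [map_mul, map_mul, phi_inr, phi_inl, phi_inl, phi_inr] at h2
      exact two_ne_two' ftne.symm (up_ne_one₂ ha0') (up_ne_one₁ hb0)
        (up_ne_one₁ hc0') (up_ne_one₂ hd0) h2
    · have hc0' : c₀⁻¹ ≠ 1 := inv_ne_one.mpr hc0
      simp only [← map_inv] at heq
      have h2 := congrArg phi heq
      rw [map_mul, map_mul, phi_inr, phi_inl, phi_inr, phi_inl] at h2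
      obtain ⟨h3, h4⟩ := two_eq_two ftne.symm (up_ne_one₂ ha0') (up_ne_one₁ hb0)
        (up_ne_one₂ hc0') (up_ne_one₁ hd0) h2
      have e1 : a₀⁻¹ = c₀⁻¹ := congrArg ULift.down h3
      have e2 : b₀ = d₀ := congrArg ULift.down h4
      exact Or.inl ⟨by rw [inv_injective e1], by rw [e2]⟩
end
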